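/- Suppose r is the nonzero Gauss remainder of nonzero a, b ∈ ℤ[i], φ(r) ≥ φ(b) = n, and 2^{v₂(r)} does not divide w_{n-1}. Then min(|Re r|, |Im r|) = 0 and φ(r - (u_b/u_r)·b) < φ(b), where u_b, u_r are the canonical units of b and r. -/

import Mathlib

open GaussianInt

noncomputable section

/-- The sequence w: w_{2k} = 3·2^k, w_{2k+1} = 4·2^k. -/
def w (n : ℕ) : ℤ := if n % 2 = 0 then 3 * 2 ^ (n / 2) else 4 * 2 ^ (n / 2)

/-- 2-adic valuation of gcd(Re z, Im z). -/
def v2 (z : GaussianInt) : ℕ := padicValNat 2 (Int.gcd z.re z.im)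

/-- ℓ₁ norm. -/
def l1 (z : GaussianInt) : ℤ := |z.re| + |z.im|

/-- ℓ∞ norm. -/
def linf (z : GaussianInt) : ℤ := max |z.re| |z.im|

/-- m(z) = min(|Re z|, |Im z|). -/
def mm (z : GaussianInt) : ℤ := min |z.re| |z.im|

/-- The algebraic norm. -/
def Nm (z : GaussianInt) : ℤ := z.re ^ 2 + z.im ^ 2

/-- Graves' formula for the minimal Euclidean function φ on ℤ[i]. -/
def phi (z : GaussianInt) : ℕ :=
  let j := v2 z
  let n := sInf {n : ℕ | |z.re| ≤ 2 ^ j * (w n - 2) ∧ |z.im| ≤ 2 ^ j * (w n - 2)}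
  if l1 z ≤ 2 ^ j * (w (n + 1) - 3) then n + 2 * j else n + 2 * j + 1

/-- Nearest integer, rounding halves down. -/
def nint (x : ℚ) : ℤ := if x - ⌊x⌋ ≤ 1 / 2 then ⌊x⌋ else ⌈x⌉

/-- Gauss quotient: coordinatewise nearest-integer rounding of a·conj(b)/Nm(b). -/
def gq (a b : GaussianInt) : GaussianInt :=
  ⟨nint (((a.re * b.re + a.im * b.im : ℤ) : ℚ) / ((b.re ^ 2 + b.im ^ 2 : ℤ) : ℚ)),
   nint (((a.im * b.re - a.re * b.im : ℤ) : ℚ) / ((b.re ^ 2 + b.im ^ 2 : ℤ) : ℚ))⟩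

/-- Gauss remainder. -/
def gr (a b : GaussianInt) : GaussianInt := a - gq a b * b

/-- The imaginary unit in ℤ[i]. -/
def Ii : GaussianInt := ⟨0, 1⟩

/-- The canonical unit u_z. -/
def uz (z : GaussianInt) : GaussianInt :=
  if |z.re| > |z.im| then (if 0 < z.re then 1 else -1)
  else if |z.im| > |z.re| then (if 0 < z.im then -Ii else Ii)
  else if 0 < z.re then (if 0 < z.im then 1 else Ii)
  else (if 0 < z.im then -Ii else -1)

/-- s(z) = sgn(Im(u_z·z)). -/
def sfun (z : GaussianInt) : ℤ := Int.sign ((uz z * z).im)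


-- ==================== helpers ====================

lemma w_even (t : ℕ) : w (2*t) = 3 * 2^t := by
  simp [w, Nat.mul_div_cancel_left, Nat.mul_mod_right]
lemma w_odd (t : ℕ) : w (2*t+1) = 4 * 2^t := by
  have h1 : (2*t+1) % 2 = 1 := by omega
  have h2 : (2*t+1) / 2 = t := by omega
  simp [w, h1, h2]

lemma two_pow_pos (k : ℕ) : (0:ℤ) < 2^k := by positivity
lemma one_le_two_pow (k : ℕ) : (1:ℤ) ≤ 2^k := two_pow_pos k

def mfun (z : GaussianInt) : ℕ :=
  sInf {n : ℕ | |z.re| ≤ 2 ^ (v2 z) * (w n - 2) ∧ |z.im| ≤ 2 ^ (v2 z) * (w n - 2)}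

lemma phi_def (z : GaussianInt) :
    phi z = if l1 z ≤ 2 ^ (v2 z) * (w (mfun z + 1) - 3) then mfun z + 2 * (v2 z)
      else mfun z + 2 * (v2 z) + 1 := rfl

lemma mfun_set_nonempty (z : GaussianInt) :
    {n : ℕ | |z.re| ≤ 2 ^ (v2 z) * (w n - 2) ∧ |z.im| ≤ 2 ^ (v2 z) * (w n - 2)}.Nonempty := by
  set k := (max |z.re| |z.im|).toNat with hk
  refine ⟨2*k, ?_, ?_⟩ <;>
  · rw [w_even]
    have h1 : (k:ℤ) < 2^k := by exact_mod_cast @Nat.lt_two_pow_self k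
    have h2 : |z.re| ⊔ |z.im| ≤ (k:ℤ) := by
      rw [hk, Int.toNat_of_nonneg (le_max_of_le_left (abs_nonneg _))]
    have h3 := one_le_two_pow (v2 z)
    have h4 := two_pow_pos k
    nlinarith [le_max_left |z.re| |z.im|, le_max_right |z.re| |z.im|, abs_nonneg z.re,
      abs_nonneg z.im]

lemma mfun_mem (z : GaussianInt) :
    |z.re| ≤ 2 ^ (v2 z) * (w (mfun z) - 2) ∧ |z.im| ≤ 2 ^ (v2 z) * (w (mfun z) - 2) :=
  Nat.sInf_mem (mfun_set_nonempty z)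

lemma mfun_min (z : GaussianInt) {s : ℕ} (hs : s < mfun z) :
    ¬(|z.re| ≤ 2 ^ (v2 z) * (w s - 2) ∧ |z.im| ≤ 2 ^ (v2 z) * (w s - 2)) :=
  Nat.notMem_of_lt_sInf hs

lemma phi_le (z : GaussianInt) (s : ℕ)
    (h1 : |z.re| ≤ 2 ^ (v2 z) * (w s - 2)) (h2 : |z.im| ≤ 2 ^ (v2 z) * (w s - 2))
    (h3 : l1 z ≤ 2 ^ (v2 z) * (w (s+1) - 3)) : phi z ≤ s + 2 * (v2 z) := by
  have hm : mfun z ≤ s := Nat.sInf_le ⟨h1, h2⟩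
  rw [phi_def]
  split_ifs with h
  · omega
  · rcases eq_or_lt_of_le hm with h' | h'
    · exact absurd (h' ▸ h3) h
    · omega

lemma nint_abs (x : ℚ) : |x - nint x| ≤ 1/2 := by
  rw [nint]
  split_ifs with h
  · rw [abs_le]
    exact ⟨by linarith [Int.floor_le x], h⟩
  · rw [abs_le]
    push_neg at h
    have h1 := Int.le_ceil x
    have h2 : (⌈x⌉ : ℚ) ≤ ⌊x⌋ + 1 := by exact_mod_cast Int.ceil_le_floor_add_one x
    constructor <;> linarith

lemma round_bound (A N : ℤ) (hN : 0 < N) :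
    2 * |A - nint ((A:ℚ)/(N:ℚ)) * N| ≤ N := by
  set q := nint ((A:ℚ)/(N:ℚ)) with hq
  have hNQ : (0:ℚ) < (N:ℚ) := by exact_mod_cast hN
  have h1 : |(A:ℚ)/N - q| ≤ 1/2 := nint_abs _
  have h2 : |(A:ℚ) - q*N| ≤ (N:ℚ)/2 := by
    have e : (A:ℚ) - q*N = ((A:ℚ)/N - q) * N := by field_simp
    rw [e, abs_mul, abs_of_pos hNQ]
    nlinarith [abs_nonneg ((A:ℚ)/N - (q:ℚ))]
  have h3 : ((2 * |A - q*N| : ℤ) : ℚ) ≤ ((N:ℤ):ℚ) := by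
    push_cast [Int.cast_abs]
    push_cast at h2
    linarith
  exact_mod_cast h3

lemma gauss_bounds (a b : GaussianInt) (hb : b ≠ 0) :
    2 * |(gr a b).re * b.re + (gr a b).im * b.im| ≤ b.re^2 + b.im^2 ∧
    2 * |(gr a b).im * b.re - (gr a b).re * b.im| ≤ b.re^2 + b.im^2 := by
  have hbne : b.re ≠ 0 ∨ b.im ≠ 0 := by
    by_contra h
    push_neg at h
    exact hb (Zsqrtd.ext_iff.mpr (by simp [h.1, h.2]))
  have hN : 0 < b.re^2 + b.im^2 := by
    rcases hbne with h | h
    · nlinarith [sq_nonneg b.im, pow_two_pos_of_ne_zero h]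
    · nlinarith [sq_nonneg b.re, pow_two_pos_of_ne_zero h]
  have e1 : (gr a b).re * b.re + (gr a b).im * b.im
      = (a.re * b.re + a.im * b.im) - (gq a b).re * (b.re^2 + b.im^2) := by
    simp only [gr, Zsqrtd.re_sub, Zsqrtd.im_sub, Zsqrtd.re_mul, Zsqrtd.im_mul]
    ring
  have e2 : (gr a b).im * b.re - (gr a b).re * b.im
      = (a.im * b.re - a.re * b.im) - (gq a b).im * (b.re^2 + b.im^2) := by
    simp only [gr, Zsqrtd.re_sub, Zsqrtd.im_sub, Zsqrtd.re_mul, Zsqrtd.im_mul]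
    ring
  constructor
  · rw [e1]; exact round_bound _ _ hN
  · rw [e2]; exact round_bound _ _ hN

lemma norm_half (r b : GaussianInt)
    (h1 : 2 * |r.re * b.re + r.im * b.im| ≤ b.re^2 + b.im^2)
    (h2 : 2 * |r.im * b.re - r.re * b.im| ≤ b.re^2 + b.im^2)
    (hN : 0 < b.re^2 + b.im^2) :
    2 * (r.re^2 + r.im^2) ≤ b.re^2 + b.im^2 := by
  set u := r.re * b.re + r.im * b.im
  set v := r.im * b.re - r.re * b.im
  set N := b.re^2 + b.im^2 with hNd
  have key : u^2 + v^2 = (r.re^2 + r.im^2) * N := by rw [hNd]; ring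
  have hu : 4 * u^2 ≤ N^2 := by nlinarith [abs_nonneg u, sq_abs u]
  have hv : 4 * v^2 ≤ N^2 := by nlinarith [abs_nonneg v, sq_abs v]
  nlinarith [hN]

section v2facts
variable (z : GaussianInt)

lemma v2_dvd : (2:ℤ)^(v2 z) ∣ z.re ∧ (2:ℤ)^(v2 z) ∣ z.im := by
  have h : (2:ℕ)^(v2 z) ∣ Int.gcd z.re z.im := pow_padicValNat_dvd
  constructor
  · have := dvd_trans (Int.natCast_dvd_natCast.mpr h) (Int.gcd_dvd_left _ _)
    simpa using this
  · have := dvd_trans (Int.natCast_dvd_natCast.mpr h) (Int.gcd_dvd_right _ _)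
    simpa using this

lemma v2_exact (hz : z ≠ 0) :
    ¬((2:ℤ)^(v2 z + 1) ∣ z.re ∧ (2:ℤ)^(v2 z + 1) ∣ z.im) := by
  haveI : Fact (Nat.Prime 2) := ⟨Nat.prime_two⟩
  have hg : Int.gcd z.re z.im ≠ 0 := by
    intro h
    rw [Int.gcd_eq_zero_iff] at h
    exact hz (Zsqrtd.ext_iff.mpr (by simp [h.1, h.2]))
  intro ⟨h1, h2⟩
  have h3 : (2:ℤ)^(v2 z + 1) ∣ (Int.gcd z.re z.im : ℤ) := Int.dvd_coe_gcd h1 h2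
  have h4 : (2:ℕ)^(v2 z + 1) ∣ Int.gcd z.re z.im := by exact_mod_cast h3
  exact pow_succ_padicValNat_not_dvd hg h4

end v2facts

lemma v2_eq_of (z : GaussianInt) (k : ℕ) (hz : z ≠ 0)
    (h1 : (2:ℤ)^k ∣ z.re) (h2 : (2:ℤ)^k ∣ z.im)
    (h3 : ¬((2:ℤ)^(k+1) ∣ z.re ∧ (2:ℤ)^(k+1) ∣ z.im)) : v2 z = k := by
  haveI : Fact (Nat.Prime 2) := ⟨Nat.prime_two⟩
  have hg : Int.gcd z.re z.im ≠ 0 := by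
    intro h
    rw [Int.gcd_eq_zero_iff] at h
    exact hz (Zsqrtd.ext_iff.mpr (by simp [h.1, h.2]))
  have hle : k ≤ padicValNat 2 (Int.gcd z.re z.im) := by
    rw [← padicValNat_dvd_iff_le hg]
    exact_mod_cast Int.dvd_coe_gcd h1 h2
  have hlt : ¬ (k+1 ≤ padicValNat 2 (Int.gcd z.re z.im)) := by
    rw [← padicValNat_dvd_iff_le hg]
    intro hdvd
    have hd : (2:ℤ)^(k+1) ∣ (Int.gcd z.re z.im : ℤ) := by exact_mod_cast hdvd
    exact h3 ⟨dvd_trans hd (Int.gcd_dvd_left _ _), dvd_trans hd (Int.gcd_dvd_right _ _)⟩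
  unfold v2
  omega

lemma uzb_spec (b : GaussianInt) :
    (uz b * b).re = max |b.re| |b.im| ∧ |(uz b * b).im| = min |b.re| |b.im| := by
  have hre : Ii.re = 0 := rfl
  have him : Ii.im = 1 := rfl
  unfold uz
  split_ifs with h1 h2 h3 h4 h5 h6 h7 <;>
  · constructor <;>
    · simp only [Zsqrtd.re_mul, Zsqrtd.im_mul, Zsqrtd.re_neg, Zsqrtd.im_neg, hre, him,
        Zsqrtd.re_one, Zsqrtd.im_one]
      simp only [Int.abs_eq_natAbs] at *
      omega

lemma v2_zero : v2 0 = 0 := by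
  simp [v2]

lemma phi_zero : phi 0 = 0 := by
  have h0 : mfun 0 = 0 := by
    apply Nat.sInf_eq_zero.mpr
    left
    constructor <;> simp [v2_zero, w]
  rw [phi_def, h0, v2_zero]
  simp [l1, w]

lemma comp_combine (J c d N : ℤ) (h1 : 2*(J*|c + d|) ≤ N) (h2 : 2*(J*|c - d|) ≤ N) :
    2*(J*(|c|+|d|)) ≤ N := by
  have h : |c|+|d| = |c+d| ∨ |c|+|d| = |c-d| := by
    simp only [Int.abs_eq_natAbs]
    omega
  rcases h with h | h <;> rw [h] <;> assumption

-- ============ pure integer arithmetic lemmas ============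

lemma JJ_contra (X Y J : ℤ) (h1 : 1 ≤ X) (hY0 : 0 ≤ Y) (hYX : Y ≤ X)
    (hX2J : X ≤ 2*J - 2) (hcomp : 2*J*(X+Y) ≤ X^2+Y^2) : False := by
  nlinarith [mul_nonneg (by linarith : (0:ℤ) ≤ X - 1) (by linarith : (0:ℤ) ≤ 2*J-2-X),
    mul_nonneg hY0 (by linarith : (0:ℤ) ≤ 2*J-Y)]

lemma UB_ee (X Y A B : ℤ) (hA : 1 ≤ A) (hB : 1 ≤ B) (hY0 : 0 ≤ Y) (hYX : Y ≤ X)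
    (h1 : X ≤ B*(3*A-2)) (h2 : X+Y ≤ B*(4*A-3)) : X^2+Y^2 < 12*A^2*B^2 := by
  have key : X*(X+Y) ≤ (B*(3*A-2))*(B*(4*A-3)) :=
    mul_le_mul h1 h2 (by linarith) (by nlinarith)
  nlinarith [mul_nonneg hY0 (sub_nonneg.mpr hYX),
    mul_pos (mul_pos (by linarith : (0:ℤ) < B) (by linarith : (0:ℤ) < B))
      (by linarith : (0:ℤ) < 17*A-6)]

lemma UB_oe (X Y A B : ℤ) (hA : 1 ≤ A) (hB : 1 ≤ B) (hY0 : 0 ≤ Y) (hYX : Y ≤ X)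
    (h1 : X ≤ B*(4*A-2)) (h2 : X+Y ≤ B*(6*A-3)) : X^2+Y^2 < 24*A^2*B^2 := by
  have key : X*(X+Y) ≤ (B*(4*A-2))*(B*(6*A-3)) :=
    mul_le_mul h1 h2 (by linarith) (by nlinarith)
  nlinarith [mul_nonneg hY0 (sub_nonneg.mpr hYX),
    mul_pos (mul_pos (by linarith : (0:ℤ) < B) (by linarith : (0:ℤ) < B))
      (by linarith : (0:ℤ) < 24*A-6)]

lemma UB_e1 (X Y A B : ℤ) (hA : 1 ≤ A) (hB : 1 ≤ B) (hY0 : 0 ≤ Y) (hYX : Y ≤ X)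
    (h1 : X ≤ B*(3*A-2)) : X^2+Y^2 < 24*A^2*B^2 := by
  nlinarith [mul_le_mul h1 h1 (by linarith) (by nlinarith),
    mul_le_mul hYX hYX hY0 (by linarith),
    mul_pos (mul_pos (by linarith : (0:ℤ) < B) (by linarith : (0:ℤ) < B))
      (by linarith : (0:ℤ) < A), sq_nonneg (A*B)]

lemma UB_o1 (X Y A B : ℤ) (hA : 1 ≤ A) (hB : 1 ≤ B) (hY0 : 0 ≤ Y) (hYX : Y ≤ X)
    (h1 : X ≤ B*(4*A-2)) : X^2+Y^2 < 48*A^2*B^2 := by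
  nlinarith [mul_le_mul h1 h1 (by linarith) (by nlinarith),
    mul_le_mul hYX hYX hY0 (by linarith),
    mul_pos (mul_pos (by linarith : (0:ℤ) < B) (by linarith : (0:ℤ) < B))
      (by linarith : (0:ℤ) < A), sq_nonneg (A*B)]

lemma X2J_bound (X A B : ℤ) (hA : 1 ≤ A) (hB : 1 ≤ B)
    (h : X ≤ B*(3*A-2) ∨ X ≤ B*(4*A-2)) : X ≤ 2*(2*A*B) - 2 := by
  rcases h with h | h <;> nlinarith

lemma X_ge_J (X Y J : ℤ) (hX1 : 1 ≤ X) (hY0 : 0 ≤ Y) (hYX : Y ≤ X)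
    (h : 2*(J*X) ≤ X^2+Y^2) : J ≤ X := by
  by_contra h'
  push_neg at h'
  nlinarith [mul_pos (by linarith : (0:ℤ) < X) (by linarith : (0:ℤ) < J - X),
    mul_self_le_mul_self hY0 hYX]

lemma coord_classify (J c S : ℤ) (hJ : 0 < J) (k : ℕ) (hJk : J = 2^k) (hd : (2:ℤ)^k ∣ c)
    (hS : c^2 ≤ S) (hS3 : S < 3*J^2) : c = 0 ∨ |c| = J := by
  obtain ⟨d, hd'⟩ := hd
  rw [← hJk] at hd'
  have hdd : d = 0 ∨ |d| = 1 ∨ 2 ≤ |d| := by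
    simp only [Int.abs_eq_natAbs]
    omega
  rcases hdd with h | h | h
  · left; rw [hd', h]; ring
  · right; rw [hd', abs_mul, h, abs_of_pos hJ]; ring
  · exfalso
    have h2 : 4 ≤ d^2 := by nlinarith [sq_abs d]
    have h3 : c^2 = J^2 * d^2 := by rw [hd']; ring
    nlinarith [sq_nonneg J]

lemma DY_bounds (X Y A B J D : ℤ) (hA : 1 ≤ A) (hB : 1 ≤ B) (hJ : J = 2*A*B)
    (hD : D = X - J) (hJX : J ≤ X) (hY0 : 0 ≤ Y) (hYX : Y ≤ X)
    (hcase : (X ≤ B*(4*A-2) ∧ X+Y ≤ B*(6*A-3) ∧ B*(3*A-2) < X ∧ B ∣ D) ∨ (X ≤ B*(3*A-2))) :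
    D ≤ B*(3*A-2) ∧ Y ≤ B*(3*A-2) ∧ D + Y ≤ B*(4*A-3) := by
  have hB0 : (0:ℤ) < B := by linarith
  rcases hcase with ⟨h1, h2, h3, hBD⟩ | h1
  · obtain ⟨c, hc⟩ := hBD
    have hc1 : B*(A-2) < B*c := by nlinarith
    have hc2 : A-2 < c := lt_of_mul_lt_mul_left hc1 (by linarith)
    have hc3 : A-1 ≤ c := by omega
    have hD' : B*(A-1) ≤ D := by
      rw [hc]
      exact mul_le_mul_of_nonneg_left hc3 (by linarith)
    refine ⟨by nlinarith, by nlinarith, by nlinarith⟩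
  · have hAB : B ≤ A*B := by nlinarith
    refine ⟨by nlinarith, by nlinarith, by nlinarith⟩

lemma pow2_split (t jb c : ℕ) :
    (2:ℤ)^(2*t+2*jb+c) = (2:ℤ)^c * ((2:ℤ)^t)^2 * ((2:ℤ)^jb)^2 := by
  have h : 2*t+2*jb+c = c + t*2 + jb*2 := by ring
  rw [h, pow_add, pow_add, pow_mul, pow_mul]

lemma abs_trick (J x s N : ℤ) (hJ : 0 < J) (h : 2*|s| ≤ N)
    (hs : s = J*x ∨ s = -(J*x)) : 2*(J*|x|) ≤ N := by
  have e : 2*(J*|x|) = 2*|J*x| := by rw [abs_mul, abs_of_pos hJ]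
  rw [e]
  rcases hs with h' | h'
  · rw [← h']; exact h
  · rw [← abs_neg, ← h']; exact h

set_option maxHeartbeats 1600000 in
theorem stmt13 (a b r : GaussianInt) (n : ℕ) (ha : a ≠ 0) (hb : b ≠ 0) (hr : r = gr a b)
    (hr0 : r ≠ 0) (hphi : phi r ≥ phi b) (hn : phi b = n) (hn1 : 1 ≤ n)
    (hdvd : ¬((2 ^ (v2 r) : ℤ) ∣ w (n - 1))) :
    mm r = 0 ∧ phi (r - uz b * star (uz r) * b) < phi b := by
  haveI : Fact (Nat.Prime 2) := ⟨Nat.prime_two⟩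
  obtain ⟨hbre, hbim⟩ := v2_dvd b
  have hbex := v2_exact b hb
  obtain ⟨hrre, hrim⟩ := v2_dvd r
  obtain ⟨hbm1, hbm2⟩ := mfun_mem b
  set jb := v2 b with hjb
  set jr := v2 r with hjr
  set m := mfun b with hm
  set X := max |b.re| |b.im| with hXdef
  set Y := min |b.re| |b.im| with hYdef
  have hYX : Y ≤ X := min_le_max
  have hY0 : (0:ℤ) ≤ Y := le_min (abs_nonneg _) (abs_nonneg _)
  have hsum_sq : X^2 + Y^2 = b.re^2 + b.im^2 := by
    rcases le_total |b.re| |b.im| with h | h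
    · rw [hXdef, hYdef, max_eq_right h, min_eq_left h, sq_abs, sq_abs]; ring
    · rw [hXdef, hYdef, max_eq_left h, min_eq_right h, sq_abs, sq_abs]
  have hdX : (2:ℤ)^jb ∣ X := by
    rcases max_choice |b.re| |b.im| with h | h <;> rw [hXdef, h]
    exacts [(dvd_abs _ _).mpr hbre, (dvd_abs _ _).mpr hbim]
  have hdY : (2:ℤ)^jb ∣ Y := by
    rcases min_choice |b.re| |b.im| with h | h <;> rw [hYdef, h]
    exacts [(dvd_abs _ _).mpr hbre, (dvd_abs _ _).mpr hbim]
  have hbne : b.re ≠ 0 ∨ b.im ≠ 0 := by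
    by_contra h
    push_neg at h
    exact hb (Zsqrtd.ext_iff.mpr (by simp [h.1, h.2]))
  have hX1 : (1:ℤ) ≤ X := by
    rw [hXdef]
    simp only [Int.abs_eq_natAbs]
    rcases hbne with h | h <;> omega
  have hNpos : (0:ℤ) < b.re^2 + b.im^2 := by rw [← hsum_sq]; positivity
  obtain ⟨comp1, comp2⟩ : 2 * |r.re * b.re + r.im * b.im| ≤ b.re^2 + b.im^2 ∧
      2 * |r.im * b.re - r.re * b.im| ≤ b.re^2 + b.im^2 := by
    rw [hr]; exact gauss_bounds a b hb
  have hNm : 2 * (r.re^2 + r.im^2) ≤ X^2 + Y^2 := by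
    rw [hsum_sq]; exact norm_half r b comp1 comp2 hNpos
  have hXm : X ≤ 2^jb * (w m - 2) := max_le hbm1 hbm2
  have hl1b : l1 b = X + Y := by
    rw [l1, hXdef, hYdef]; omega
  have hcase : (n = m + 2*jb ∧ X + Y ≤ 2^jb * (w (m+1) - 3)) ∨ (n = m + 2*jb + 1) := by
    have h := hn
    rw [phi_def, ← hm, ← hjb, hl1b] at h
    split_ifs at h with hE
    exacts [Or.inl ⟨h.symm, hE⟩, Or.inr h.symm]
  have hmmin : ∀ s : ℕ, s < m → 2^jb * (w s - 2) < X := by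
    intro s hs
    have h := mfun_min b (s := s) hs
    rw [← hjb] at h
    push_neg at h
    rcases le_or_gt |b.re| (2^jb * (w s - 2)) with h' | h'
    · exact lt_of_lt_of_le (h h') (le_max_right _ _)
    · exact lt_of_lt_of_le h' (le_max_left _ _)
  -- unified upper bound
  have hUB : X^2 + Y^2 < 3 * 2^(n+2) := by
    have hPar : (∃ t, m = 2*t) ∨ (∃ t, m = 2*t+1) := by
      rcases Nat.even_or_odd m with ⟨t, ht⟩ | ⟨t, ht⟩
      exacts [Or.inl ⟨t, by omega⟩, Or.inr ⟨t, ht⟩]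
    rcases hPar with ⟨t, ht⟩ | ⟨t, ht⟩ <;> rcases hcase with ⟨hn', hXY⟩ | hn'
    · have hXm' : X ≤ 2^jb * (3*2^t - 2) := by rw [ht, w_even] at hXm; exact hXm
      have hXY' : X+Y ≤ 2^jb * (4*2^t - 3) := by rw [ht, w_odd] at hXY; exact hXY
      have h12 : 3*(2:ℤ)^(n+2) = 12*((2:ℤ)^t)^2*((2:ℤ)^jb)^2 := by
        rw [hn', ht, pow2_split t jb 2]; ring
      rw [h12]
      exact UB_ee X Y _ _ (one_le_two_pow t) (one_le_two_pow jb) hY0 hYX hXm' hXY'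
    · have hXm' : X ≤ 2^jb * (3*2^t - 2) := by rw [ht, w_even] at hXm; exact hXm
      have h24 : 3*(2:ℤ)^(n+2) = 24*((2:ℤ)^t)^2*((2:ℤ)^jb)^2 := by
        rw [hn', ht]
        rw [show 2*t+2*jb+1+2 = 2*t+2*jb+3 by omega, pow2_split t jb 3]; ring
      rw [h24]
      exact UB_e1 X Y _ _ (one_le_two_pow t) (one_le_two_pow jb) hY0 hYX hXm'
    · have hXm' : X ≤ 2^jb * (4*2^t - 2) := by rw [ht, w_odd] at hXm; exact hXm
      have hXY' : X+Y ≤ 2^jb * (6*2^t - 3) := by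
        rw [ht, show 2*t+1+1 = 2*(t+1) by omega, w_even, pow_succ] at hXY
        calc X+Y ≤ 2^jb * (3*(2^t*2) - 3) := hXY
          _ = 2^jb * (6*2^t - 3) := by ring
      have h24 : 3*(2:ℤ)^(n+2) = 24*((2:ℤ)^t)^2*((2:ℤ)^jb)^2 := by
        rw [hn', ht]
        rw [show 2*t+1+2*jb+2 = 2*t+2*jb+3 by omega, pow2_split t jb 3]; ring
      rw [h24]
      exact UB_oe X Y _ _ (one_le_two_pow t) (one_le_two_pow jb) hY0 hYX hXm' hXY'
    · have hXm' : X ≤ 2^jb * (4*2^t - 2) := by rw [ht, w_odd] at hXm; exact hXm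
      have h48 : 3*(2:ℤ)^(n+2) = 48*((2:ℤ)^t)^2*((2:ℤ)^jb)^2 := by
        rw [hn', ht]
        rw [show 2*t+1+2*jb+1+2 = 2*t+2*jb+4 by omega, pow2_split t jb 4]; ring
      rw [h48]
      exact UB_o1 X Y _ _ (one_le_two_pow t) (one_le_two_pow jb) hY0 hYX hXm'
  -- norm of r is at least 2^(2 jr)
  have hrne : r.re ≠ 0 ∨ r.im ≠ 0 := by
    by_contra h
    push_neg at h
    exact hr0 (Zsqrtd.ext_iff.mpr (by simp [h.1, h.2]))
  have hkey : ∀ c : ℤ, c ≠ 0 → (2:ℤ)^jr ∣ c → (2:ℤ)^(2*jr) ≤ c^2 := by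
    intro c hc hdc
    have h1 : (2:ℤ)^jr ≤ |c| := Int.le_of_dvd (abs_pos.mpr hc) ((dvd_abs _ _).mpr hdc)
    have h2 : (0:ℤ) ≤ 2^jr := by positivity
    calc (2:ℤ)^(2*jr) = ((2:ℤ)^jr)^2 := by rw [two_mul, pow_add]; ring
      _ ≤ |c|^2 := by nlinarith [h1, h2]
      _ = c^2 := sq_abs c
  have hr_sq : (2:ℤ)^(2*jr) ≤ r.re^2 + r.im^2 := by
    rcases hrne with h | h
    · have := hkey r.re h hrre
      linarith only [this, sq_nonneg r.im]
    · have := hkey r.im h hrim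
      linarith only [this, sq_nonneg r.re]
  -- n is odd
  have hodd : ∃ σ, n = 2*σ+1 := by
    rcases Nat.even_or_odd n with ⟨σ, hσ⟩ | ⟨σ, hσ⟩
    · exfalso
      obtain ⟨k, hk⟩ : ∃ k, σ = k+1 := ⟨σ-1, by omega⟩
      replace hσ : n = 2*k+2 := by omega
      have hw : w (n-1) = 4 * 2^k := by
        have h5 : n - 1 = 2*k+1 := by omega
        rw [h5, w_odd]
      have hjr_ge : k + 3 ≤ jr := by
        by_contra hcon
        push_neg at hcon
        apply hdvd
        rw [hw, show (4:ℤ) * 2^k = 2^(k+2) by rw [pow_add]; ring]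
        exact pow_dvd_pow 2 (by omega)
      have h1 : (2:ℤ)^(n+4) ≤ 2^(2*jr) := pow_le_pow_right₀ (by norm_num) (by omega)
      have h3 : (2:ℤ)^(n+5) = 8 * 2^(n+2) := by
        rw [pow_succ, pow_succ, pow_succ]; ring
      have h5 : (2:ℤ)^(n+5) = 2 * 2^(n+4) := by rw [pow_succ]; ring
      have h4 : (0:ℤ) < 2^(n+2) := two_pow_pos _
      linarith only [h1, h3, h4, h5, hr_sq, hNm, hUB]
    · exact ⟨σ, hσ⟩
  obtain ⟨σ, hσ⟩ := hodd
  have hjr_ge : σ + 1 ≤ jr := by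
    by_contra hcon
    push_neg at hcon
    apply hdvd
    rw [show n - 1 = 2*σ by omega, w_even]
    exact Dvd.dvd.mul_left (pow_dvd_pow 2 (by omega)) 3
  have hjr_eq : jr = σ + 1 := by
    by_contra hcon
    have h1 : (2:ℤ)^(n+3) ≤ 2^(2*jr) := pow_le_pow_right₀ (by norm_num) (by omega)
    have h3 : (2:ℤ)^(n+4) = 4 * 2^(n+2) := by rw [pow_succ, pow_succ]; ring
    have h5 : (2:ℤ)^(n+4) = 2 * 2^(n+3) := by rw [pow_succ]; ring
    have h4 : (0:ℤ) < 2^(n+2) := two_pow_pos _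
    linarith only [h1, h3, h4, h5, hr_sq, hNm, hUB]
  -- m, e, t decomposition
  obtain ⟨t, hσt, hme⟩ : ∃ t, σ = t + jb ∧
      ((m = 2*t+1 ∧ X+Y ≤ 2^jb*(w (m+1) - 3)) ∨ (m = 2*t)) := by
    rcases hcase with ⟨hn', hXY⟩ | hn'
    · exact ⟨σ - jb, by omega, Or.inl ⟨by omega, hXY⟩⟩
    · exact ⟨σ - jb, by omega, Or.inr (by omega)⟩
  have hbig : (X ≤ 2^jb*(4*2^t-2) ∧ X+Y ≤ 2^jb*(6*2^t-3) ∧ 2^jb*(3*2^t-2) < X)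
      ∨ (X ≤ 2^jb*(3*2^t-2)) := by
    rcases hme with ⟨hm', hXY⟩ | hm'
    · left
      refine ⟨?_, ?_, ?_⟩
      · have h := hXm; rw [hm', w_odd] at h; exact h
      · have h := hXY
        rw [hm', show 2*t+1+1 = 2*(t+1) by omega, w_even, pow_succ] at h
        calc X+Y ≤ 2^jb * (3*(2^t*2) - 3) := h
          _ = 2^jb * (6*2^t - 3) := by ring
      · have h := hmmin (2*t) (by omega)
        rw [w_even] at h; exact h
    · right
      have h := hXm; rw [hm', w_even] at h; exact h
  set A := (2:ℤ)^t with hAdef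
  set B := (2:ℤ)^jb with hBdef
  set J := (2:ℤ)^jr with hJdef
  have hJpos : (0:ℤ) < J := two_pow_pos jr
  have hA1 : (1:ℤ) ≤ A := one_le_two_pow t
  have hB1 : (1:ℤ) ≤ B := one_le_two_pow jb
  have hJ2AB : J = 2*A*B := by
    rw [hJdef, hjr_eq, hAdef, hBdef, show σ+1 = t+jb+1 by omega, pow_add, pow_add]
    ring
  have hX2J : X ≤ 2*J - 2 := by
    have h := X2J_bound X A B hA1 hB1 (by
      rcases hbig with ⟨h1, _, _⟩ | h1
      exacts [Or.inr h1, Or.inl h1])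
    rw [← hJ2AB] at h
    exact h
  have hJ2n : 2*J^2 = 2^(n+2) := by
    rw [hJdef, hjr_eq, hσ, sq, ← pow_add, show σ+1+(σ+1) = (2*σ+2) by omega,
      show 2*σ+1+2 = (2*σ+2)+1 by omega, pow_succ]
    ring
  have hr3J : r.re^2 + r.im^2 < 3*J^2 := by linarith only [hNm, hUB, hJ2n, hYX, hY0]
  have hcre := coord_classify J r.re (r.re^2+r.im^2) hJpos jr hJdef hrre
    (by linarith only [sq_nonneg r.im]) hr3J
  have hcim := coord_classify J r.im (r.re^2+r.im^2) hJpos jr hJdef hrim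
    (by linarith only [sq_nonneg r.re]) hr3J
  have hshape : (|r.re| = J ∧ r.im = 0) ∨ (r.re = 0 ∧ |r.im| = J) := by
    rcases hcre with h1 | h1 <;> rcases hcim with h2 | h2
    · exact absurd (Zsqrtd.ext_iff.mpr (by simp [h1, h2])) hr0
    · exact Or.inr ⟨h1, h2⟩
    · exact Or.inl ⟨h1, h2⟩
    · exfalso
      have hcomb : 2*(J*(|b.re|+|b.im|)) ≤ b.re^2+b.im^2 := by
        apply comp_combine
        all_goals
          rcases (abs_eq hJpos.le).mp h1 with e1 | e1 <;>
          rcases (abs_eq hJpos.le).mp h2 with e2 | e2 <;>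
          first
            | (refine abs_trick J _ _ _ hJpos comp1 (Or.inl ?_); rw [e1, e2]; ring1)
            | (refine abs_trick J _ _ _ hJpos comp1 (Or.inr ?_); rw [e1, e2]; ring1)
            | (refine abs_trick J _ _ _ hJpos comp2 (Or.inl ?_); rw [e1, e2]; ring1)
            | (refine abs_trick J _ _ _ hJpos comp2 (Or.inr ?_); rw [e1, e2]; ring1)
      have hXYs : X + Y = |b.re| + |b.im| := by
        rw [hXdef, hYdef]; omega
      have hcomp' : 2*J*(X+Y) ≤ X^2+Y^2 := by
        rw [hsum_sq, hXYs]
        linarith only [hcomb]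
      exact JJ_contra X Y J hX1 hY0 hYX hX2J hcomp'
  constructor
  · rcases hshape with ⟨h1, h2⟩ | ⟨h1, h2⟩
    · rw [mm, h2, abs_zero]
      exact min_eq_right (abs_nonneg _)
    · rw [mm, h1, abs_zero]
      exact min_eq_left (abs_nonneg _)
  · rw [hn]
    have hbb1 : 2*(J*|b.re|) ≤ b.re^2+b.im^2 := by
      rcases hshape with ⟨h1, h2⟩ | ⟨h1, h2⟩
      · rcases (abs_eq hJpos.le).mp h1 with hh | hh <;>
        first
          | (refine abs_trick J _ _ _ hJpos comp1 (Or.inl ?_); rw [hh, h2]; ring1)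
          | (refine abs_trick J _ _ _ hJpos comp1 (Or.inr ?_); rw [hh, h2]; ring1)
          | (refine abs_trick J _ _ _ hJpos comp2 (Or.inl ?_); rw [hh, h2]; ring1)
          | (refine abs_trick J _ _ _ hJpos comp2 (Or.inr ?_); rw [hh, h2]; ring1)
      · rcases (abs_eq hJpos.le).mp h2 with hh | hh <;>
        first
          | (refine abs_trick J _ _ _ hJpos comp1 (Or.inl ?_); rw [hh, h1]; ring1)
          | (refine abs_trick J _ _ _ hJpos comp1 (Or.inr ?_); rw [hh, h1]; ring1)
          | (refine abs_trick J _ _ _ hJpos comp2 (Or.inl ?_); rw [hh, h1]; ring1)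
          | (refine abs_trick J _ _ _ hJpos comp2 (Or.inr ?_); rw [hh, h1]; ring1)
    have hbb2 : 2*(J*|b.im|) ≤ b.re^2+b.im^2 := by
      rcases hshape with ⟨h1, h2⟩ | ⟨h1, h2⟩
      · rcases (abs_eq hJpos.le).mp h1 with hh | hh <;>
        first
          | (refine abs_trick J _ _ _ hJpos comp1 (Or.inl ?_); rw [hh, h2]; ring1)
          | (refine abs_trick J _ _ _ hJpos comp1 (Or.inr ?_); rw [hh, h2]; ring1)
          | (refine abs_trick J _ _ _ hJpos comp2 (Or.inl ?_); rw [hh, h2]; ring1)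
          | (refine abs_trick J _ _ _ hJpos comp2 (Or.inr ?_); rw [hh, h2]; ring1)
      · rcases (abs_eq hJpos.le).mp h2 with hh | hh <;>
        first
          | (refine abs_trick J _ _ _ hJpos comp1 (Or.inl ?_); rw [hh, h1]; ring1)
          | (refine abs_trick J _ _ _ hJpos comp1 (Or.inr ?_); rw [hh, h1]; ring1)
          | (refine abs_trick J _ _ _ hJpos comp2 (Or.inl ?_); rw [hh, h1]; ring1)
          | (refine abs_trick J _ _ _ hJpos comp2 (Or.inr ?_); rw [hh, h1]; ring1)
    have hcompX : 2*(J*X) ≤ X^2+Y^2 := by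
      rw [hsum_sq]
      rcases max_choice |b.re| |b.im| with h | h <;> rw [hXdef, h]
      exacts [hbb1, hbb2]
    have hXJ : J ≤ X := X_ge_J X Y J hX1 hY0 hYX hcompX
    set D := X - J with hDdef
    have hdD : B ∣ D := dvd_sub hdX ⟨2*A, by rw [hJ2AB]; ring⟩
    obtain ⟨hbD, hbY, hbDY⟩ := DY_bounds X Y A B J D hA1 hB1 hJ2AB hDdef hXJ hY0 hYX (by
      rcases hbig with ⟨h1', h2', h3'⟩ | h1'
      exacts [Or.inl ⟨h1', h2', h3', hdD⟩, Or.inr h1'])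
    have final : ∀ z : GaussianInt,
        (|z.re| = D ∧ |z.im| = Y) ∨ (|z.re| = Y ∧ |z.im| = D) → phi z < n := by
      intro z hz
      by_cases hz0 : z = 0
      · rw [hz0, phi_zero]; omega
      have hdDB : B ∣ D := hdD
      have hzre : B ∣ z.re := by
        rcases hz with ⟨h1', _⟩ | ⟨h1', _⟩
        · exact (dvd_abs _ _).mp (h1' ▸ hdDB)
        · exact (dvd_abs _ _).mp (h1' ▸ hdY)
      have hzim : B ∣ z.im := by
        rcases hz with ⟨_, h2'⟩ | ⟨_, h2'⟩
        · exact (dvd_abs _ _).mp (h2' ▸ hdY)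
        · exact (dvd_abs _ _).mp (h2' ▸ hdDB)
      have hexact : ¬((2:ℤ)^(jb+1) ∣ z.re ∧ (2:ℤ)^(jb+1) ∣ z.im) := by
        intro ⟨u1, u2⟩
        have hdDY : (2:ℤ)^(jb+1) ∣ D ∧ (2:ℤ)^(jb+1) ∣ Y := by
          rcases hz with ⟨h1', h2'⟩ | ⟨h1', h2'⟩
          · exact ⟨h1' ▸ (dvd_abs _ _).mpr u1, h2' ▸ (dvd_abs _ _).mpr u2⟩
          · exact ⟨h2' ▸ (dvd_abs _ _).mpr u2, h1' ▸ (dvd_abs _ _).mpr u1⟩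
        have hdXX : (2:ℤ)^(jb+1) ∣ X := by
          rw [show X = D + J by rw [hDdef]; ring]
          exact dvd_add hdDY.1 (by rw [hJdef]; exact pow_dvd_pow 2 (by omega))
        apply hbex
        rcases le_total |b.re| |b.im| with h | h
        · have hXv : X = |b.im| := by rw [hXdef]; exact max_eq_right h
          have hYv : Y = |b.re| := by rw [hYdef]; exact min_eq_left h
          exact ⟨(dvd_abs _ _).mp (hYv ▸ hdDY.2), (dvd_abs _ _).mp (hXv ▸ hdXX)⟩
        · have hXv : X = |b.re| := by rw [hXdef]; exact max_eq_left h
          have hYv : Y = |b.im| := by rw [hYdef]; exact min_eq_right h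
          exact ⟨(dvd_abs _ _).mp (hXv ▸ hdXX), (dvd_abs _ _).mp (hYv ▸ hdDY.2)⟩
      have hv2z : v2 z = jb := v2_eq_of z jb hz0 hzre hzim hexact
      have c1 : |z.re| ≤ 2^(v2 z) * (w (2*t) - 2) := by
        rw [hv2z, w_even]
        rcases hz with ⟨h1', _⟩ | ⟨h1', _⟩ <;> rw [h1']
        exacts [hbD, hbY]
      have c2 : |z.im| ≤ 2^(v2 z) * (w (2*t) - 2) := by
        rw [hv2z, w_even]
        rcases hz with ⟨_, h2'⟩ | ⟨_, h2'⟩ <;> rw [h2']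
        exacts [hbY, hbD]
      have c3 : l1 z ≤ 2^(v2 z) * (w (2*t+1) - 3) := by
        rw [l1, hv2z, w_odd]
        rcases hz with ⟨h1', h2'⟩ | ⟨h1', h2'⟩ <;> rw [h1', h2']
        · exact hbDY
        · linarith only [hbDY]
      have hle := phi_le z (2*t) c1 c2 c3
      rw [hv2z] at hle
      omega
    obtain ⟨hGre, hGim⟩ := uzb_spec b
    rw [← hXdef] at hGre
    rw [← hYdef] at hGim
    have hstarIi : star Ii = -Ii := by
      apply Zsqrtd.ext_iff.mpr
      constructor <;>
        simp [Zsqrtd.re_star, Zsqrtd.im_star, Zsqrtd.re_neg, Zsqrtd.im_neg,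
          show Ii.re = 0 from rfl, show Ii.im = 1 from rfl]
    rcases hshape with ⟨h1, h2⟩ | ⟨h1, h2⟩
    · rcases (abs_eq hJpos.le).mp h1 with hh | hh
      · have huz : uz r = 1 := by
          have c1 : |r.im| < |r.re| := by rw [h2, abs_zero, h1]; exact hJpos
          unfold uz
          rw [if_pos c1, if_pos (show 0 < r.re by rw [hh]; exact hJpos)]
        have e1 : (r - uz b * star (uz r) * b).re = J - X := by
          rw [huz, star_one, mul_one, Zsqrtd.re_sub, hh, hGre]
        have e2 : (r - uz b * star (uz r) * b).im = -(uz b * b).im := by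
          rw [huz, star_one, mul_one, Zsqrtd.im_sub, h2]; ring
        apply final
        left
        constructor
        · rw [e1, abs_sub_comm, abs_of_nonneg (by linarith only [hXJ])]
        · rw [e2, abs_neg]; exact hGim
      · have huz : uz r = -1 := by
          have c1 : |r.im| < |r.re| := by rw [h2, abs_zero, h1]; exact hJpos
          unfold uz
          rw [if_pos c1, if_neg (show ¬ 0 < r.re by rw [hh]; linarith only [hJpos])]
        have e1 : (r - uz b * star (uz r) * b).re = -J + X := by
          rw [huz, star_neg, star_one, mul_neg_one, neg_mul, sub_neg_eq_add,
            Zsqrtd.re_add, hh, hGre]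
        have e2 : (r - uz b * star (uz r) * b).im = (uz b * b).im := by
          rw [huz, star_neg, star_one, mul_neg_one, neg_mul, sub_neg_eq_add,
            Zsqrtd.im_add, h2]; ring
        apply final
        left
        constructor
        · rw [e1, show -J + X = X - J by ring, abs_of_nonneg (by linarith only [hXJ])]
        · rw [e2]; exact hGim
    · rcases (abs_eq hJpos.le).mp h2 with hh | hh
      · have huz : uz r = -Ii := by
          have c1 : ¬ (|r.im| < |r.re|) := by
            rw [h1, abs_zero, h2]; exact not_lt.mpr hJpos.le
          have c2 : |r.re| < |r.im| := by rw [h1, abs_zero, h2]; exact hJpos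
          unfold uz
          rw [if_neg c1, if_pos c2, if_pos (show 0 < r.im by rw [hh]; exact hJpos)]
        have hmul : uz b * star (uz r) * b = Ii * (uz b * b) := by
          rw [huz, star_neg, hstarIi, neg_neg]; ring
        have e1 : (r - uz b * star (uz r) * b).re = (uz b * b).im := by
          rw [hmul, Zsqrtd.re_sub, Zsqrtd.re_mul, h1,
            show Ii.re = (0:ℤ) from rfl, show Ii.im = (1:ℤ) from rfl]
          ring
        have e2 : (r - uz b * star (uz r) * b).im = J - X := by
          rw [hmul, Zsqrtd.im_sub, Zsqrtd.im_mul, hh,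
            show Ii.re = (0:ℤ) from rfl, show Ii.im = (1:ℤ) from rfl, hGre]
          ring
        apply final
        right
        constructor
        · rw [e1]; exact hGim
        · rw [e2, abs_sub_comm, abs_of_nonneg (by linarith only [hXJ])]
      · have huz : uz r = Ii := by
          have c1 : ¬ (|r.im| < |r.re|) := by
            rw [h1, abs_zero, h2]; exact not_lt.mpr hJpos.le
          have c2 : |r.re| < |r.im| := by rw [h1, abs_zero, h2]; exact hJpos
          unfold uz
          rw [if_neg c1, if_pos c2, if_neg (show ¬ 0 < r.im by rw [hh]; linarith only [hJpos])]
        have hmul : uz b * star (uz r) * b = -(Ii * (uz b * b)) := by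
          rw [huz, hstarIi]; ring
        have e1 : (r - uz b * star (uz r) * b).re = -(uz b * b).im := by
          rw [hmul, sub_neg_eq_add, Zsqrtd.re_add, Zsqrtd.re_mul, h1,
            show Ii.re = (0:ℤ) from rfl, show Ii.im = (1:ℤ) from rfl]
          ring
        have e2 : (r - uz b * star (uz r) * b).im = X - J := by
          rw [hmul, sub_neg_eq_add, Zsqrtd.im_add, Zsqrtd.im_mul, hh,
            show Ii.re = (0:ℤ) from rfl, show Ii.im = (1:ℤ) from rfl, hGre]
          ring
        apply final
        right
        constructor
        · rw [e1, abs_neg]; exact hGim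
        · rw [e2, abs_of_nonneg (by linarith only [hXJ])]
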